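/- Let M be a compact smooth manifold and let E and F be smooth complex vector bundles of finite rank over M. Then the natural map sending a smooth global section Φ of the homomorphism bundle Hom(E,F) to the C^∞(M,ℂ)-linear map Γ^∞(E) → Γ^∞(F), s ↦ (x ↦ Φ(x)(s(x))), is a bijection from Γ^∞(Hom(E,F)) onto the set of all C^∞(M,ℂ)-module homomorphisms Γ^∞(E) → Γ^∞(F). -/

import Mathlib

open Bundle Manifold
open scoped TensorProduct

local notation "∞" => (⊤ : ℕ∞)

noncomputable section

/-- Complex multiplication and addition are smooth over `ℝ`, so that the complex-valued smooth
functions on a real manifold form a (comm)ring. -/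
instance : ContMDiffRing 𝓘(ℝ, ℂ) ∞ ℂ where
  contMDiff_add := by
    rw [contMDiff_iff]
    refine ⟨continuous_add, fun x y => ?_⟩
    simp only [mfld_simps, chartAt_self_eq]
    rw [contDiffOn_univ]
    exact contDiff_add
  contMDiff_mul := by
    rw [contMDiff_iff]
    refine ⟨continuous_mul, fun x y => ?_⟩
    simp only [mfld_simps, chartAt_self_eq]
    rw [contDiffOn_univ]
    exact contDiff_mul

variable {EM : Type*} [NormedAddCommGroup EM] [NormedSpace ℝ EM] [FiniteDimensional ℝ EM]
  {HM : Type*} [TopologicalSpace HM] {IM : ModelWithCorners ℝ EM HM}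
  {M : Type*} [TopologicalSpace M] [ChartedSpace HM M] [IsManifold IM ∞ M]
  [T2Space M] [SecondCountableTopology M] [CompactSpace M]

/-- The constant functions make the smooth complex-valued functions a `ℂ`-algebra. -/
instance : Algebra ℂ C^∞⟮IM, M; 𝓘(ℝ, ℂ), ℂ⟯ :=
  RingHom.toAlgebra
    { toFun := fun c => ⟨fun _ => c, contMDiff_const⟩
      map_one' := rfl
      map_mul' := fun _ _ => rfl
      map_zero' := rfl
      map_add' := fun _ _ => rfl }

variable {F : Type*} [NormedAddCommGroup F] [NormedSpace ℂ F] [FiniteDimensional ℂ F]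
  {V : M → Type*} [TopologicalSpace (TotalSpace F V)]
  [∀ x, AddCommGroup (V x)] [∀ x, Module ℂ (V x)] [∀ x, TopologicalSpace (V x)]
  [FiberBundle F V] [VectorBundle ℂ F V] [VectorBundle ℝ F V] [ContMDiffVectorBundle ∞ F V IM]

/-- Pointwise scalar multiplication of a smooth section by a smooth function. -/
instance ContMDiffSection.instSMulSmoothMap :
    SMul C^∞⟮IM, M; 𝓘(ℝ, ℂ), ℂ⟯ Cₛ^∞⟮IM; F, V⟯ := by
  refine ⟨fun f s => ⟨fun x => f x • s x, ?_⟩⟩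
  intro x₀
  have hs := s.contMDiff x₀
  have hf : ContMDiffAt IM 𝓘(ℝ, ℂ) ∞ f x₀ := f.contMDiff x₀
  rw [contMDiffAt_section] at hs ⊢
  set e := trivializationAt F V x₀
  have h1 : ContMDiffAt IM 𝓘(ℝ, F →L[ℝ] F) ∞
      (fun x => (ContinuousLinearMap.lsmul ℝ ℂ (f x) : F →L[ℝ] F)) x₀ :=
    ContDiff.comp_contMDiffAt
      (g := ⇑(ContinuousLinearMap.lsmul ℝ ℂ : ℂ →L[ℝ] F →L[ℝ] F))
      (ContinuousLinearMap.contDiff _) hf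
  refine (h1.clm_apply hs).congr_of_eventuallyEq ?_
  refine Filter.eventually_of_mem
    (e.open_baseSet.mem_nhds <| mem_baseSet_trivializationAt F V x₀) ?_
  intro x hx
  simp only [ContinuousLinearMap.lsmul_apply]
  exact (e.linear ℂ hx).2 (f x) (s x)

set_option linter.unusedSectionVars false in
@[simp]
theorem ContMDiffSection.coe_smul_smoothMap (f : C^∞⟮IM, M; 𝓘(ℝ, ℂ), ℂ⟯)
    (s : Cₛ^∞⟮IM; F, V⟯) (x : M) : (f • s) x = f x • s x :=
  rfl

/-- The smooth sections of a smooth complex vector bundle form a module over the algebra of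
smooth complex-valued functions on the base. -/
instance ContMDiffSection.instModuleSmoothMap :
    Module C^∞⟮IM, M; 𝓘(ℝ, ℂ), ℂ⟯ Cₛ^∞⟮IM; F, V⟯ where
  one_smul s := ContMDiffSection.ext fun x => one_smul ℂ (s x)
  mul_smul f g s := ContMDiffSection.ext fun x => mul_smul (f x) (g x) (s x)
  smul_zero f := ContMDiffSection.ext fun x => smul_zero (f x)
  smul_add f s t := ContMDiffSection.ext fun x => smul_add (f x) (s x) (t x)
  add_smul f g s := ContMDiffSection.ext fun x => add_smul (f x) (g x) (s x)
  zero_smul s := ContMDiffSection.ext fun x => zero_smul ℂ (s x)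

instance ContMDiffSection.instModuleComplex : Module ℂ Cₛ^∞⟮IM; F, V⟯ :=
  Module.compHom _ (algebraMap ℂ C^∞⟮IM, M; 𝓘(ℝ, ℂ), ℂ⟯)

instance ContMDiffSection.instIsScalarTowerComplex :
    IsScalarTower ℂ C^∞⟮IM, M; 𝓘(ℝ, ℂ), ℂ⟯ Cₛ^∞⟮IM; F, V⟯ :=
  ⟨fun c f s => by
    show (c • f) • s = algebraMap ℂ C^∞⟮IM, M; 𝓘(ℝ, ℂ), ℂ⟯ c • f • s
    rw [Algebra.smul_def, mul_smul]⟩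

variable {F₂ : Type*} [NormedAddCommGroup F₂] [NormedSpace ℂ F₂] [FiniteDimensional ℂ F₂]
  {W : M → Type*} [TopologicalSpace (TotalSpace F₂ W)]
  [∀ x, AddCommGroup (W x)] [∀ x, Module ℂ (W x)] [∀ x, TopologicalSpace (W x)]
  [FiberBundle F₂ W] [VectorBundle ℂ F₂ W] [VectorBundle ℝ F₂ W] [ContMDiffVectorBundle ∞ F₂ W IM]
  [∀ x, IsTopologicalAddGroup (W x)] [∀ x, ContinuousSMul ℂ (W x)]
  [VectorBundle ℝ (F →L[ℂ] F₂) ((fun x ↦ V x →SL[RingHom.id ℂ] W x))]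
  [ContMDiffVectorBundle ∞ (F →L[ℂ] F₂) ((fun x ↦ V x →SL[RingHom.id ℂ] W x)) IM]

set_option linter.unusedSectionVars false

section Aux

/-- Bump function data: a smooth real function `χ` vanishing outside an open set `U` whose
closure is contained in a given open set `B`, and equal to `1` on a neighborhood `N` of `x₀`. -/
theorem exists_bump_data (x₀ : M) {B : Set M} (hB : IsOpen B) (hxB : x₀ ∈ B) :
    ∃ (U N : Set M) (χ : C^∞⟮IM, M; 𝓘(ℝ), ℝ⟯), IsOpen N ∧ x₀ ∈ N ∧
      closure U ⊆ B ∧ Set.EqOn χ 0 Uᶜ ∧ Set.EqOn χ 1 N := by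
  obtain ⟨K, hK, hxK, hKB⟩ := exists_compact_subset hB hxB
  obtain ⟨K', hK', hxK', hK'U⟩ := exists_compact_subset isOpen_interior hxK
  obtain ⟨χ, hχ0, hχ1, -⟩ := exists_contMDiffMap_zero_one_of_isClosed (n := ∞) IM
    (isOpen_interior (s := K)).isClosed_compl hK'.isClosed
    (Set.disjoint_left.2 fun a ha ha' => ha (hK'U ha'))
  refine ⟨interior K, interior K', χ, isOpen_interior, hxK', ?_, hχ0,
    fun y hy => hχ1 (interior_subset hy)⟩
  exact (closure_minimal interior_subset hK.isClosed).trans hKB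

/-- A local section of the bundle obtained from a trivialization, cut off by a bump function,
is a smooth global section. -/
theorem contMDiff_bump_section (x₀ : M) {U : Set M}
    (hUB : closure U ⊆ (trivializationAt F V x₀).baseSet)
    (χ : C^∞⟮IM, M; 𝓘(ℝ), ℝ⟯) (hχ0 : Set.EqOn χ 0 Uᶜ) (w : F) :
    ContMDiff IM (IM.prod 𝓘(ℝ, F)) ∞
      (fun y => TotalSpace.mk' F y ((χ y : ℂ) • (trivializationAt F V x₀).symm y w)) := by
  set e := trivializationAt F V x₀ with he
  intro y₀
  by_cases hy₀ : y₀ ∈ e.baseSet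
  · refine (e.contMDiffAt_iff (e.mem_source.mpr hy₀)).2 ⟨contMDiffAt_id, ?_⟩
    have hsm : ContMDiffAt IM 𝓘(ℝ, F) ∞
        (fun y => ((((ContinuousLinearMap.lsmul ℝ ℂ).flip w).comp
          Complex.ofRealCLM : ℝ →L[ℝ] F)) (χ y)) y₀ :=
      ((((ContinuousLinearMap.lsmul ℝ ℂ).flip w).comp
        Complex.ofRealCLM).contDiff.comp_contMDiff χ.contMDiff).contMDiffAt
    apply hsm.congr_of_eventuallyEq
    filter_upwards [e.open_baseSet.mem_nhds hy₀] with y hy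
    have h1 : (e ⟨y, (χ y : ℂ) • e.symm y w⟩).2 = (χ y : ℂ) • (e ⟨y, e.symm y w⟩).2 :=
      (e.linear ℂ hy).2 _ _
    have h2 : (e ⟨y, e.symm y w⟩).2 = w := congrArg Prod.snd (e.apply_mk_symm hy w)
    calc (e (TotalSpace.mk' F y ((χ y : ℂ) • e.symm y w))).2 = (χ y : ℂ) • w := by
          rw [h1, h2]
      _ = _ := by simp
  · have hy' : y₀ ∈ (closure U)ᶜ := fun h => hy₀ (hUB h)
    refine ((contMDiff_zeroSection ℝ V).contMDiffAt).congr_of_eventuallyEq ?_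
    filter_upwards [isClosed_closure.isOpen_compl.mem_nhds hy'] with y hy
    have hχ : χ y = 0 := hχ0 fun hyU => hy (subset_closure hyU)
    simp [Bundle.zeroSection, hχ]

/-- Smoothness of cut-off coordinate functions of a smooth section. -/
theorem contMDiff_coord (x₀ : M) {U : Set M}
    (hUB : closure U ⊆ (trivializationAt F V x₀).baseSet)
    (χ : C^∞⟮IM, M; 𝓘(ℝ), ℝ⟯) (hχ0 : Set.EqOn χ 0 Uᶜ) (s : Cₛ^∞⟮IM; F, V⟯) (φ : F →L[ℂ] ℂ) :
    ContMDiff IM 𝓘(ℝ, ℂ) ∞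
      (fun y => (χ y : ℂ) * φ ((trivializationAt F V x₀ ⟨y, s y⟩).2)) := by
  set e := trivializationAt F V x₀ with he
  intro y₀
  by_cases hy₀ : y₀ ∈ e.baseSet
  · have h1 : ContMDiffAt IM 𝓘(ℝ, ℂ) ∞ (fun y => (χ y : ℂ)) y₀ :=
      (Complex.ofRealCLM.contDiff.comp_contMDiff χ.contMDiff).contMDiffAt
    have h2 : ContMDiffAt IM 𝓘(ℝ, F) ∞ (fun y => (e ⟨y, s y⟩).2) y₀ :=
      ((e.contMDiffAt_iff (e.mem_source.mpr hy₀)).1 (s.contMDiff y₀)).2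
    exact h1.mul ((φ.restrictScalars ℝ).contDiff.comp_contMDiffAt h2)
  · have hy' : y₀ ∈ (closure U)ᶜ := fun h => hy₀ (hUB h)
    refine (contMDiffAt_const (c := (0 : ℂ))).congr_of_eventuallyEq ?_
    filter_upwards [isClosed_closure.isOpen_compl.mem_nhds hy'] with y hy
    have hχ : χ y = 0 := hχ0 fun hyU => hy (subset_closure hyU)
    simp [hχ]

theorem ContMDiffSection.coe_sum' {ι : Type*} (s : Finset ι)
    (f : ι → Cₛ^∞⟮IM; F, V⟯) (x : M) : (∑ i ∈ s, f i) x = ∑ i ∈ s, f i x := by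
  classical
  induction s using Finset.induction with
  | empty => simp [ContMDiffSection.coe_zero]
  | insert _ _ h ih =>
    rw [Finset.sum_insert h, Finset.sum_insert h, ← ih]
    rw [ContMDiffSection.coe_add]
    rfl

theorem symmL_apply' (e : Trivialization F (π F V)) [e.IsLinear ℂ] {b : M}
    (hb : b ∈ e.baseSet) (y : F) : e.symmL ℂ b y = e.symm b y :=
  e.symmL_apply (R := ℂ) hb y

end Aux

/-- A `C^∞(M,ℂ)`-linear map on sections is a local (in fact pointwise) operator: if a section
vanishes at a point, so does its image. -/
theorem apply_eq_zero_of_section_eq_zero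
    (T : Cₛ^∞⟮IM; F, V⟯ →ₗ[C^∞⟮IM, M; 𝓘(ℝ, ℂ), ℂ⟯] Cₛ^∞⟮IM; F₂, W⟯)
    (s : Cₛ^∞⟮IM; F, V⟯) (x₀ : M) (hs : s x₀ = 0) : T s x₀ = 0 := by
  classical
  set e := trivializationAt F V x₀ with he
  have hx₀ : x₀ ∈ e.baseSet := FiberBundle.mem_baseSet_trivializationAt F V x₀
  obtain ⟨U, N, χ, hNo, hxN, hUB, hχ0, hχ1⟩ := exists_bump_data (IM := IM) x₀ e.open_baseSet hx₀
  set b := Module.finBasis ℂ F with hb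
  set t : Fin (Module.finrank ℂ F) → Cₛ^∞⟮IM; F, V⟯ := fun i =>
    ⟨fun y => (χ y : ℂ) • e.symm y (b i), contMDiff_bump_section x₀ hUB χ hχ0 (b i)⟩ with ht
  set φ : Fin (Module.finrank ℂ F) → (F →L[ℂ] ℂ) := fun i =>
    LinearMap.toContinuousLinearMap (b.coord i) with hφ
  set g : Fin (Module.finrank ℂ F) → C^∞⟮IM, M; 𝓘(ℝ, ℂ), ℂ⟯ := fun i =>
    ⟨fun y => (χ y : ℂ) * φ i ((e ⟨y, s y⟩).2), contMDiff_coord x₀ hUB χ hχ0 s (φ i)⟩ with hg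
  set χℂ : C^∞⟮IM, M; 𝓘(ℝ, ℂ), ℂ⟯ :=
    ⟨fun y => (χ y : ℂ), Complex.ofRealCLM.contDiff.comp_contMDiff χ.contMDiff⟩ with hχℂ
  have key : (χℂ * χℂ) • s = ∑ i, g i • t i := by
    apply ContMDiffSection.ext; intro y
    have hsum : (∑ i, g i • t i) y = ∑ i, g i y • t i y := by
      rw [ContMDiffSection.coe_sum']
      exact Finset.sum_congr rfl fun i _ => rfl
    show (χℂ * χℂ) y • s y = _
    rw [hsum]
    by_cases hy : y ∈ e.baseSet
    · calc ((χℂ * χℂ) y) • s y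
          = ((χ y : ℂ) * (χ y : ℂ)) • s y := rfl
        _ = ∑ i, g i y • t i y := ?_
      have step1 : ∀ i, g i y • t i y
          = ((χ y : ℂ) * (χ y : ℂ)) •
            ((b.repr ((e ⟨y, s y⟩).2) i) • (e.symmL ℂ y) (b i)) := by
        intro i
        show ((χ y : ℂ) * φ i ((e ⟨y, s y⟩).2)) • ((χ y : ℂ) • e.symm y (b i)) = _
        have : φ i ((e ⟨y, s y⟩).2) = b.repr ((e ⟨y, s y⟩).2) i := by
          rw [hφ]; simp [Module.Basis.coord_apply]
        rw [this, smul_smul, smul_smul, symmL_apply' _ hy]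
        ring_nf
      rw [Finset.sum_congr rfl fun i _ => step1 i, ← Finset.smul_sum]
      congr 1
      have : ∑ i, (b.repr ((e ⟨y, s y⟩).2) i) • (e.symmL ℂ y) (b i)
          = (e.symmL ℂ y) ((e ⟨y, s y⟩).2) := by
        simp_rw [← map_smul]
        rw [← map_sum, Module.Basis.sum_repr]
      rw [this, symmL_apply' _ hy, e.symm_apply_apply_mk hy]
    · have hyU : y ∈ Uᶜ := fun h => hy (hUB (subset_closure h))
      have hχy : χ y = 0 := hχ0 hyU
      have hl : (χℂ * χℂ) y • s y = 0 := by
        show ((χ y : ℂ) * (χ y : ℂ)) • s y = 0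
        rw [hχy]; simp
      rw [hl]
      refine (Finset.sum_eq_zero fun i _ => ?_).symm
      show ((χ y : ℂ) * φ i ((e ⟨y, s y⟩).2)) • t i y = 0
      rw [hχy]; simp
  have hz : (e ⟨x₀, s x₀⟩).2 = (0 : F) := by
    rw [hs]
    exact (e.linear ℂ hx₀).map_zero
  have hχx₀ : χ x₀ = 1 := hχ1 hxN
  calc T s x₀ = ((χℂ * χℂ) • T s) x₀ := by
        show T s x₀ = ((χℂ * χℂ) x₀) • T s x₀
        show T s x₀ = ((χ x₀ : ℂ) * (χ x₀ : ℂ)) • T s x₀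
        rw [hχx₀]; simp
    _ = (T ((χℂ * χℂ) • s)) x₀ := by rw [map_smul]
    _ = (T (∑ i, g i • t i)) x₀ := by rw [key]
    _ = (∑ i, g i • T (t i)) x₀ := by rw [map_sum]; simp_rw [map_smul]
    _ = 0 := by
        rw [ContMDiffSection.coe_sum']
        refine Finset.sum_eq_zero fun i _ => ?_
        show ((χ x₀ : ℂ) * φ i ((e ⟨x₀, s x₀⟩).2)) • (T (t i)) x₀ = 0
        rw [hz]
        simp

set_option maxHeartbeats 2000000 in
/-- Smooth global sections of the homomorphism bundle `Hom(E,F)` correspond bijectively,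
via pointwise application, to module homomorphisms `Γ^∞(E) → Γ^∞(F)` over the smooth functions. -/
theorem sections_hom_bundle_equiv_linearMap :
    (∀ Φ : Cₛ^∞⟮IM; F →L[ℂ] F₂, (fun x ↦ V x →SL[RingHom.id ℂ] W x)⟯,
      ∃ T : Cₛ^∞⟮IM; F, V⟯ →ₗ[C^∞⟮IM, M; 𝓘(ℝ, ℂ), ℂ⟯] Cₛ^∞⟮IM; F₂, W⟯,
        ∀ (s : Cₛ^∞⟮IM; F, V⟯) (x : M), T s x = Φ x (s x)) ∧
    (∀ T : Cₛ^∞⟮IM; F, V⟯ →ₗ[C^∞⟮IM, M; 𝓘(ℝ, ℂ), ℂ⟯] Cₛ^∞⟮IM; F₂, W⟯,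
      ∃! Φ : Cₛ^∞⟮IM; F →L[ℂ] F₂, (fun x ↦ V x →SL[RingHom.id ℂ] W x)⟯,
        ∀ (s : Cₛ^∞⟮IM; F, V⟯) (x : M), T s x = Φ x (s x)) := by
  constructor
  · -- From a smooth section of the hom bundle to a module homomorphism
    intro Φ
    have hsm : ∀ s : Cₛ^∞⟮IM; F, V⟯, ContMDiff IM (IM.prod 𝓘(ℝ, F₂)) ∞
        (fun x => TotalSpace.mk' F₂ x (Φ x (s x))) := by
      intro s x₀
      rw [contMDiffAt_section]
      set e₁ := trivializationAt F V x₀ with he₁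
      set e₂ := trivializationAt F₂ W x₀ with he₂
      have hΦ := Φ.contMDiff x₀
      rw [contMDiffAt_section] at hΦ
      have hs := s.contMDiff x₀
      rw [contMDiffAt_section] at hs
      have h1 : ContMDiffAt IM 𝓘(ℝ, F →L[ℝ] F₂) ∞
          (fun y => (ContinuousLinearMap.restrictScalarsL ℂ F F₂ ℝ ℝ)
            ((trivializationAt (F →L[ℂ] F₂) ((fun x ↦ V x →SL[RingHom.id ℂ] W x)) x₀
              ⟨y, Φ y⟩).2)) x₀ :=
        (ContinuousLinearMap.restrictScalarsL ℂ F F₂ ℝ ℝ).contDiff.comp_contMDiffAt hΦ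
      have h2 := h1.clm_apply hs
      apply h2.congr_of_eventuallyEq
      have hmem : e₁.baseSet ∩ e₂.baseSet ∈ nhds x₀ :=
        (e₁.open_baseSet.inter e₂.open_baseSet).mem_nhds
          ⟨FiberBundle.mem_baseSet_trivializationAt F V x₀,
           FiberBundle.mem_baseSet_trivializationAt F₂ W x₀⟩
      filter_upwards [hmem] with y hy
      obtain ⟨hy1, hy2⟩ := hy
      show (e₂ ⟨y, Φ y (s y)⟩).2
        = (ContinuousLinearMap.restrictScalarsL ℂ F F₂ ℝ ℝ)
            ((trivializationAt (F →L[ℂ] F₂) ((fun x ↦ V x →SL[RingHom.id ℂ] W x)) x₀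
              ⟨y, Φ y⟩).2) ((e₁ ⟨y, s y⟩).2)
      rw [hom_trivializationAt_apply]
      show (e₂ ⟨y, Φ y (s y)⟩).2
        = (e₂.continuousLinearMapAt ℂ y) (Φ y ((e₁.symmL ℂ y) ((e₁ ⟨y, s y⟩).2)))
      rw [symmL_apply' _ hy1, e₁.symm_apply_apply_mk hy1,
        Trivialization.continuousLinearMapAt_apply, e₂.coe_linearMapAt_of_mem hy2]
    refine ⟨{ toFun := fun s => ⟨fun x => Φ x (s x), hsm s⟩
              map_add' := ?_
              map_smul' := ?_ }, fun s x => rfl⟩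
    · intro s u
      apply ContMDiffSection.ext; intro x
      show Φ x ((s + u) x) = _
      rw [ContMDiffSection.coe_add]
      show Φ x (s x + u x) = _
      rw [map_add, ContMDiffSection.coe_add]
      rfl
    · intro f s
      apply ContMDiffSection.ext; intro x
      show Φ x (f x • s x) = f x • Φ x (s x)
      exact map_smul (Φ x) (f x) (s x)
  · -- From a module homomorphism to a smooth section of the hom bundle
    intro T
    have hdata := fun x : M => exists_bump_data (IM := IM) x
      (trivializationAt F V x).open_baseSet (FiberBundle.mem_baseSet_trivializationAt F V x)
    choose U N χ hNo hxN hUB hχ0 hχ1 using hdata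
    set sec : ∀ _ : M, F → Cₛ^∞⟮IM; F, V⟯ := fun x w =>
      ⟨fun y => (χ x y : ℂ) • (trivializationAt F V x).symm y w,
        contMDiff_bump_section x (hUB x) (χ x) (hχ0 x) w⟩ with hsec
    have sec_apply : ∀ (x : M) (w : F) (y : M),
        sec x w y = (χ x y : ℂ) • (trivializationAt F V x).symm y w := fun x w y => rfl
    have sec_self : ∀ (x : M) (w : F), sec x w x = (trivializationAt F V x).symm x w := by
      intro x w
      rw [sec_apply]
      have h1 : χ x x = 1 := hχ1 x (hxN x)
      rw [h1]; simp
    have hloc : ∀ (s u : Cₛ^∞⟮IM; F, V⟯) (x : M), s x = u x → T s x = T u x := by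
      intro s u x hsu
      have h0 : (s - u) x = 0 := by
        rw [ContMDiffSection.coe_sub]
        show s x - u x = 0
        rw [hsu, sub_self]
      have h1 := apply_eq_zero_of_section_eq_zero T (s - u) x h0
      rw [map_sub] at h1
      rw [ContMDiffSection.coe_sub] at h1
      exact sub_eq_zero.mp h1
    have hψadd : ∀ (x : M) (w w' : F), sec x (w + w') = sec x w + sec x w' := by
      intro x w w'
      apply ContMDiffSection.ext; intro y
      rw [ContMDiffSection.coe_add]
      show (χ x y : ℂ) • (trivializationAt F V x).symm y (w + w')
        = (χ x y : ℂ) • (trivializationAt F V x).symm y w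
          + (χ x y : ℂ) • (trivializationAt F V x).symm y w'
      by_cases hy : y ∈ (trivializationAt F V x).baseSet
      · have h1 := map_add ((trivializationAt F V x).symmL ℂ y) w w'
        simp only [symmL_apply' _ hy] at h1
        rw [h1, smul_add]
      · have hχy : χ x y = 0 := hχ0 x fun h => hy (hUB x (subset_closure h))
        simp [hχy]
    have hψsmul : ∀ (x : M) (c : ℂ) (w : F),
        sec x (c • w) = (algebraMap ℂ C^∞⟮IM, M; 𝓘(ℝ, ℂ), ℂ⟯ c) • sec x w := by
      intro x c w
      apply ContMDiffSection.ext; intro y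
      show (χ x y : ℂ) • (trivializationAt F V x).symm y (c • w)
        = c • ((χ x y : ℂ) • (trivializationAt F V x).symm y w)
      by_cases hy : y ∉ (trivializationAt F V x).baseSet
      · have hχy : χ x y = 0 := hχ0 x fun h => hy (hUB x (subset_closure h))
        simp [hχy]
      push_neg at hy
      have h1 := map_smul ((trivializationAt F V x).symmL ℂ y) c w
      simp only [symmL_apply' _ hy] at h1
      rw [h1, smul_comm]
    set ψ : ∀ x : M, F →ₗ[ℂ] W x := fun x =>
      { toFun := fun w => T (sec x w) x
        map_add' := fun w w' => by
          show T (sec x (w + w')) x = T (sec x w) x + T (sec x w') x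
          rw [hψadd, map_add, ContMDiffSection.coe_add]; rfl
        map_smul' := fun c w => by
          show T (sec x (c • w)) x = c • T (sec x w) x
          rw [hψsmul, map_smul]
          show (algebraMap ℂ C^∞⟮IM, M; 𝓘(ℝ, ℂ), ℂ⟯ c • T (sec x w)) x = _
          rw [ContMDiffSection.coe_smul_smoothMap]
          rfl } with hψ
    set Φ₀ : ∀ x : M, V x →L[ℂ] W x := fun x =>
      (LinearMap.toContinuousLinearMap (ψ x)).comp
        ((trivializationAt F V x).continuousLinearMapAt ℂ x) with hΦ₀def
    have hΦ₀ : ∀ (s : Cₛ^∞⟮IM; F, V⟯) (x : M), T s x = Φ₀ x (s x) := by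
      intro s x
      have hx : x ∈ (trivializationAt F V x).baseSet :=
        FiberBundle.mem_baseSet_trivializationAt F V x
      have h1 : Φ₀ x (s x)
          = T (sec x ((trivializationAt F V x).continuousLinearMapAt ℂ x (s x))) x := rfl
      have h2 : (trivializationAt F V x).continuousLinearMapAt ℂ x (s x)
          = ((trivializationAt F V x) ⟨x, s x⟩).2 := by
        rw [Trivialization.continuousLinearMapAt_apply,
          (trivializationAt F V x).coe_linearMapAt_of_mem hx]
      have h3 : sec x (((trivializationAt F V x) ⟨x, s x⟩).2) x = s x := by
        rw [sec_self]
        exact (trivializationAt F V x).symm_apply_apply_mk hx (s x)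
      rw [h1, h2]
      exact hloc s _ x h3.symm
    have hΦsm : ContMDiff IM (IM.prod 𝓘(ℝ, F →L[ℂ] F₂)) ∞
        (fun x => TotalSpace.mk' (F →L[ℂ] F₂) x (Φ₀ x)) := by
      intro x₀
      rw [contMDiffAt_section]
      set e₁ := trivializationAt F V x₀ with he₁
      set e₂ := trivializationAt F₂ W x₀ with he₂
      set b := Module.finBasis ℂ F with hb
      set Q : (Fin (Module.finrank ℂ F) → F₂) →L[ℂ] (F →L[ℂ] F₂) :=
        LinearMap.toContinuousLinearMap
          ((LinearMap.toContinuousLinearMap :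
            (F →ₗ[ℂ] F₂) ≃ₗ[ℂ] (F →L[ℂ] F₂)).toLinearMap.comp
            (b.constr ℂ).toLinearMap) with hQ
      have hQapp : ∀ (v : Fin (Module.finrank ℂ F) → F₂) (i : Fin (Module.finrank ℂ F)),
          Q v (b i) = v i := by
        intro v i
        show (LinearMap.toContinuousLinearMap ((b.constr ℂ) v)) (b i) = v i
        rw [LinearMap.coe_toContinuousLinearMap']
        exact b.constr_basis ℂ v i
      have hTt : ∀ i, ContMDiffAt IM 𝓘(ℝ, F₂) ∞
          (fun y => (e₂ ⟨y, T (sec x₀ (b i)) y⟩).2) x₀ := by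
        intro i
        have h := (T (sec x₀ (b i))).contMDiff x₀
        rwa [contMDiffAt_section] at h
      have hpi : ContMDiffAt IM 𝓘(ℝ, Fin (Module.finrank ℂ F) → F₂) ∞
          (fun y i => (e₂ ⟨y, T (sec x₀ (b i)) y⟩).2) x₀ := contMDiffAt_pi_space.2 hTt
      have hsm : ContMDiffAt IM 𝓘(ℝ, F →L[ℂ] F₂) ∞
          (fun y => (Q.restrictScalars ℝ) (fun i => (e₂ ⟨y, T (sec x₀ (b i)) y⟩).2)) x₀ :=
        (Q.restrictScalars ℝ).contDiff.comp_contMDiffAt hpi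
      apply hsm.congr_of_eventuallyEq
      have hmem : (N x₀ ∩ (e₁.baseSet ∩ e₂.baseSet)) ∈ nhds x₀ :=
        ((hNo x₀).inter (e₁.open_baseSet.inter e₂.open_baseSet)).mem_nhds
          ⟨hxN x₀, FiberBundle.mem_baseSet_trivializationAt F V x₀,
            FiberBundle.mem_baseSet_trivializationAt F₂ W x₀⟩
      filter_upwards [hmem] with y hy
      obtain ⟨hyN, hy1, hy2⟩ := hy
      rw [hom_trivializationAt_apply]
      show ContinuousLinearMap.inCoordinates F V F₂ W x₀ y x₀ y (Φ₀ y)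
        = (Q.restrictScalars ℝ) (fun i => (e₂ ⟨y, T (sec x₀ (b i)) y⟩).2)
      refine ContinuousLinearMap.coe_injective (b.ext fun i => ?_)
      show (e₂.continuousLinearMapAt ℂ y) (Φ₀ y ((e₁.symmL ℂ y) (b i)))
        = Q (fun i => (e₂ ⟨y, T (sec x₀ (b i)) y⟩).2) (b i)
      rw [hQapp]
      have hsecy : sec x₀ (b i) y = (e₁.symmL ℂ y) (b i) := by
        rw [sec_apply]
        have h1 : χ x₀ y = 1 := hχ1 x₀ hyN
        rw [h1, symmL_apply' _ hy1]
        simp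
        rfl
      have h4 : Φ₀ y ((e₁.symmL ℂ y) (b i)) = T (sec x₀ (b i)) y := by
        rw [← hsecy]
        exact (hΦ₀ (sec x₀ (b i)) y).symm
      rw [h4, Trivialization.continuousLinearMapAt_apply, e₂.coe_linearMapAt_of_mem hy2]
    refine ⟨⟨fun x => Φ₀ x, hΦsm⟩, fun s x => hΦ₀ s x, ?_⟩
    intro Φ' hΦ'
    apply ContMDiffSection.ext; intro x
    apply ContinuousLinearMap.ext; intro v
    have hx : x ∈ (trivializationAt F V x).baseSet :=
      FiberBundle.mem_baseSet_trivializationAt F V x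
    have h3 : sec x (((trivializationAt F V x) ⟨x, v⟩).2) x = v := by
      rw [sec_self]
      exact (trivializationAt F V x).symm_apply_apply_mk hx v
    have h1 := hΦ' (sec x (((trivializationAt F V x) ⟨x, v⟩).2)) x
    have h2 := hΦ₀ (sec x (((trivializationAt F V x) ⟨x, v⟩).2)) x
    rw [h3] at h1 h2
    exact h1.symm.trans h2


end
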